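/- (Lemma 1, quantitative form.) Let L : ℝ^d → ℝ be differentiable with gradient ∇L Lipschitz continuous with constant L₀, and let θ ∈ ℝ^d and α > 0. Let z be a random vector in ℝ^d whose coordinates are mutually independent with mean 0 and variance 1, and suppose E[‖z‖³] < ∞. Then the two-point zeroth-order gradient estimator ∇^{ZO}L(θ) := ((L(θ + αz) − L(θ − αz))/(2α)) · z satisfies ‖E[∇^{ZO}L(θ)] − ∇L(θ)‖ ≤ (L₀ α / 2) · E[‖z‖³]. In particular, E[∇^{ZO}L(θ)] converges to ∇L(θ) as α → 0, i.e. the estimator is asymptotically unbiased. -/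

import Mathlib

open MeasureTheory ProbabilityTheory
open scoped RealInnerProductSpace BigOperators

lemma taylor_aux {d : ℕ} (L : EuclideanSpace ℝ (Fin d) → ℝ) (L₀ : ℝ)
    (hdiff : Differentiable ℝ L)
    (hlip : ∀ x y, ‖gradient L x - gradient L y‖ ≤ L₀ * ‖x - y‖)
    (x h : EuclideanSpace ℝ (Fin d)) :
    |L (x + h) - L x - ⟪gradient L x, h⟫| ≤ L₀ / 2 * ‖h‖ ^ 2 := by
  by_cases hh : h = 0
  · simp [hh]
  have hhpos : 0 < ‖h‖ := norm_pos_iff.mpr hh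
  have hL₀ : 0 ≤ L₀ := by
    have h1 : 0 ≤ L₀ * ‖x - (x + h)‖ := le_trans (norm_nonneg _) (hlip x (x + h))
    have h2 : ‖x - (x + h)‖ = ‖h‖ := by rw [show x - (x + h) = -h by abel, norm_neg]
    nlinarith
  have hgc : Continuous (gradient L) := by
    have : LipschitzWith ⟨max L₀ 0, le_max_right _ _⟩ (gradient L) := by
      apply LipschitzWith.of_dist_le_mul
      intro a b
      rw [dist_eq_norm, dist_eq_norm]
      calc ‖gradient L a - gradient L b‖ ≤ L₀ * ‖a - b‖ := hlip a b
        _ ≤ max L₀ 0 * ‖a - b‖ := by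
            exact mul_le_mul_of_nonneg_right (le_max_left _ _) (norm_nonneg _)
    exact this.continuous
  have hφ : ∀ t : ℝ, HasDerivAt (fun t : ℝ => L (x + t • h))
      ⟪gradient L (x + t • h), h⟫ t := by
    intro t
    have h1 : HasDerivAt (fun t : ℝ => x + t • h) h t := by
      simpa using ((hasDerivAt_id t).smul_const h).const_add x
    have h2 : HasFDerivAt L (InnerProductSpace.toDual ℝ _ (gradient L (x + t • h)))
        (x + t • h) := ((hdiff _).hasGradientAt).hasFDerivAt
    exact h2.comp_hasDerivAt t h1
  have hcont' : Continuous fun t : ℝ => ⟪gradient L (x + t • h), h⟫ :=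
    Continuous.inner (hgc.comp (by continuity)) continuous_const
  have hFTC := intervalIntegral.integral_eq_sub_of_hasDerivAt (f := fun t : ℝ => L (x + t • h))
    (a := 0) (b := 1) (fun t _ => hφ t) (hcont'.intervalIntegrable 0 1)
  have key : L (x + h) - L x - ⟪gradient L x, h⟫
      = ∫ t in (0:ℝ)..1, (⟪gradient L (x + t • h), h⟫ - ⟪gradient L x, h⟫) := by
    rw [intervalIntegral.integral_sub (hcont'.intervalIntegrable 0 1) intervalIntegrable_const,
      hFTC, intervalIntegral.integral_const]
    simp
  rw [key]
  have hb : ∀ᵐ t ∂volume.restrict (Set.uIoc (0:ℝ) 1),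
      ‖⟪gradient L (x + t • h), h⟫ - ⟪gradient L x, h⟫‖ ≤ L₀ * ‖h‖ ^ 2 * t := by
    rw [Set.uIoc_of_le (by norm_num : (0:ℝ) ≤ 1)]
    filter_upwards [ae_restrict_mem measurableSet_Ioc] with t ht
    have ht0 : 0 < t := ht.1
    calc ‖⟪gradient L (x + t • h), h⟫ - ⟪gradient L x, h⟫‖
        = |⟪gradient L (x + t • h) - gradient L x, h⟫| := by rw [inner_sub_left]; rfl
      _ ≤ ‖gradient L (x + t • h) - gradient L x‖ * ‖h‖ := abs_real_inner_le_norm _ _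
      _ ≤ (L₀ * ‖(x + t • h) - x‖) * ‖h‖ :=
          mul_le_mul_of_nonneg_right (hlip _ _) (norm_nonneg _)
      _ = L₀ * ‖h‖ ^ 2 * t := by
          rw [show (x + t • h) - x = t • h by abel, norm_smul, Real.norm_eq_abs,
            abs_of_pos ht0]
          ring
  have hcalc : ∫ t in (0:ℝ)..1, L₀ * ‖h‖ ^ 2 * t = L₀ / 2 * ‖h‖ ^ 2 := by
    rw [intervalIntegral.integral_const_mul, integral_id]
    ring
  calc |∫ t in (0:ℝ)..1, (⟪gradient L (x + t • h), h⟫ - ⟪gradient L x, h⟫)|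
      ≤ |∫ t in (0:ℝ)..1, L₀ * ‖h‖ ^ 2 * t| := by
        exact intervalIntegral.norm_integral_le_abs_of_norm_le hb
          ((continuous_const.mul continuous_id).intervalIntegrable 0 1)
    _ = L₀ / 2 * ‖h‖ ^ 2 := by rw [hcalc, abs_of_nonneg (by positivity)]

set_option maxHeartbeats 1000000 in
/-- **Lemma 1, quantitative form.** For `L : ℝ^d → ℝ` differentiable
with `L₀`-Lipschitz gradient, and `z` a random vector with mutually independent
coordinates of mean `0` and variance `1` and `E[‖z‖³] < ∞`, the two-point
zeroth-order estimator `((L(θ+αz) - L(θ-αz))/(2α)) • z` satisfies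
`‖E[∇^{ZO}L(θ)] - ∇L(θ)‖ ≤ (L₀ α / 2) E[‖z‖³]`. -/
theorem stmt1 {Ω : Type*} [MeasurableSpace Ω] {μ : Measure Ω} [IsProbabilityMeasure μ]
    {d : ℕ} (L : EuclideanSpace ℝ (Fin d) → ℝ) (L₀ : ℝ)
    (hdiff : Differentiable ℝ L)
    (hlip : ∀ x y, ‖gradient L x - gradient L y‖ ≤ L₀ * ‖x - y‖)
    (θ : EuclideanSpace ℝ (Fin d)) (α : ℝ) (hα : 0 < α)
    (z : Ω → EuclideanSpace ℝ (Fin d)) (hzm : Measurable z)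
    (hindep : iIndepFun (fun i ω => z ω i) μ)
    (hmean : ∀ i, ∫ ω, z ω i ∂μ = 0)
    (hvar : ∀ i, ∫ ω, (z ω i) ^ 2 ∂μ = 1)
    (hmom3 : Integrable (fun ω => ‖z ω‖ ^ 3) μ) :
    ‖(∫ ω, ((L (θ + α • z ω) - L (θ - α • z ω)) / (2 * α)) • z ω ∂μ) - gradient L θ‖
      ≤ L₀ * α / 2 * ∫ ω, ‖z ω‖ ^ 3 ∂μ := by
  set g := gradient L θ with hg
  set f : Ω → EuclideanSpace ℝ (Fin d) :=
    fun ω => ((L (θ + α • z ω) - L (θ - α • z ω)) / (2 * α)) • z ω with hf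
  -- measurability of coordinates
  have hzi : ∀ i, Measurable fun ω => z ω i := fun i =>
    ((EuclideanSpace.proj (𝕜 := ℝ) i).continuous.measurable).comp hzm
  -- coordinate bound
  have hcoord : ∀ ω i, |z ω i| ≤ ‖z ω‖ := by
    intro ω i
    have h1 : z ω i = ⟪EuclideanSpace.single i (1:ℝ), z ω⟫ := by
      rw [EuclideanSpace.inner_single_left]; simp
    rw [h1]
    calc |⟪EuclideanSpace.single i (1:ℝ), z ω⟫| ≤ ‖EuclideanSpace.single i (1:ℝ)‖ * ‖z ω‖ :=
        abs_real_inner_le_norm _ _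
      _ = ‖z ω‖ := by rw [EuclideanSpace.norm_single]; simp
  -- basic integrable bound function
  have hbnd : Integrable (fun ω => 1 + ‖z ω‖ ^ 3) μ := (integrable_const 1).add hmom3
  have hsq : ∀ x : ℝ, 0 ≤ x → x ^ 2 ≤ 1 + x ^ 3 := by
    intro x hx
    nlinarith [mul_nonneg hx (sq_nonneg (x - 1)), sq_nonneg (x - 1/2)]
  -- integrability of coordinate products
  have hprodInt : ∀ i j, Integrable (fun ω => z ω i * z ω j) μ := by
    intro i j
    apply Integrable.mono' hbnd (((hzi i).mul (hzi j)).aestronglyMeasurable)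
    filter_upwards with ω
    rw [Real.norm_eq_abs, Pi.mul_apply, abs_mul]
    calc |z ω i| * |z ω j| ≤ ‖z ω‖ * ‖z ω‖ :=
        mul_le_mul (hcoord ω i) (hcoord ω j) (abs_nonneg _) (norm_nonneg _)
      _ = ‖z ω‖ ^ 2 := (sq (‖z ω‖)).symm
      _ ≤ 1 + ‖z ω‖ ^ 3 := hsq _ (norm_nonneg _)
  -- second moments
  have hprod : ∀ i j, ∫ ω, z ω i * z ω j ∂μ = if i = j then 1 else 0 := by
    intro i j
    by_cases hij : i = j
    · subst hij
      simp only [if_pos rfl]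
      rw [show (fun ω => z ω i * z ω i) = fun ω => z ω i ^ 2 by funext ω; ring]
      exact hvar i
    · rw [if_neg hij]
      have hind : IndepFun (fun ω => z ω i) (fun ω => z ω j) μ := hindep.indepFun hij
      have := hind.integral_fun_mul_eq_mul_integral (hzi i).aestronglyMeasurable (hzi j).aestronglyMeasurable
      calc ∫ ω, z ω i * z ω j ∂μ = (∫ ω, z ω i ∂μ) * ∫ ω, z ω j ∂μ := this
        _ = 0 := by rw [hmean i, hmean j]; ring
  -- integrability of ⟪g, z⟫ • z
  have hInt2 : Integrable (fun ω => ⟪g, z ω⟫ • z ω) μ := by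
    have hc : Continuous fun v : EuclideanSpace ℝ (Fin d) => ⟪g, v⟫ • v :=
      by fun_prop
    apply Integrable.mono' (hbnd.const_mul ‖g‖) ((hc.measurable.comp hzm).aestronglyMeasurable)
    filter_upwards with ω
    show ‖⟪g, z ω⟫ • z ω‖ ≤ _
    rw [norm_smul, Real.norm_eq_abs]
    calc |⟪g, z ω⟫| * ‖z ω‖ ≤ (‖g‖ * ‖z ω‖) * ‖z ω‖ :=
        mul_le_mul_of_nonneg_right (abs_real_inner_le_norm _ _) (norm_nonneg _)
      _ = ‖g‖ * ‖z ω‖ ^ 2 := by ring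
      _ ≤ ‖g‖ * (1 + ‖z ω‖ ^ 3) :=
        mul_le_mul_of_nonneg_left (hsq _ (norm_nonneg _)) (norm_nonneg _)
  -- E[⟪g,z⟫ z] = g
  have hEg : (∫ ω, ⟪g, z ω⟫ • z ω ∂μ) = g := by
    refine PiLp.ext fun i => ?_
    have hproj := (EuclideanSpace.proj (𝕜 := ℝ) i).integral_comp_comm hInt2
    have hL : (∫ ω, ⟪g, z ω⟫ • z ω ∂μ) i
        = ∫ ω, ⟪g, z ω⟫ * z ω i ∂μ := by
      simpa using hproj.symm
    rw [hL]
    have hexp : ∀ ω, ⟪g, z ω⟫ * z ω i = ∑ j, g j * (z ω j * z ω i) := by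
      intro ω
      rw [PiLp.inner_apply]
      simp only [RCLike.inner_apply, conj_trivial]
      rw [Finset.sum_mul]
      congr 1; funext j; ring
    calc (∫ ω, ⟪g, z ω⟫ * z ω i ∂μ)
        = ∫ ω, ∑ j, g j * (z ω j * z ω i) ∂μ := by
          congr 1; funext ω; exact hexp ω
      _ = ∑ j, ∫ ω, g j * (z ω j * z ω i) ∂μ :=
          integral_finset_sum _ (fun j _ => (hprodInt j i).const_mul _)
      _ = ∑ j, g j * ∫ ω, z ω j * z ω i ∂μ := by
          congr 1; funext j; exact integral_const_mul _ _
      _ = ∑ j, g j * (if j = i then 1 else 0) := by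
          congr 1; funext j; rw [hprod j i]
      _ = g i := by simp
  -- key pointwise bound
  have hkey : ∀ ω, ‖f ω - ⟪g, z ω⟫ • z ω‖ ≤ L₀ * α / 2 * ‖z ω‖ ^ 3 := by
    intro ω
    set v := z ω with hv
    have t1 : |L (θ + α • v) - L θ - ⟪g, α • v⟫| ≤ L₀ / 2 * ‖α • v‖ ^ 2 :=
      taylor_aux L L₀ hdiff hlip θ (α • v)
    have t2 : |L (θ - α • v) - L θ - ⟪g, -(α • v)⟫| ≤ L₀ / 2 * ‖α • v‖ ^ 2 := by
      have := taylor_aux L L₀ hdiff hlip θ (-(α • v))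
      rw [norm_neg] at this
      rwa [show θ + -(α • v) = θ - α • v by abel] at this
    rw [real_inner_smul_right] at t1
    rw [inner_neg_right, real_inner_smul_right] at t2
    have hns : ‖α • v‖ = α * ‖v‖ := by
      rw [norm_smul, Real.norm_eq_abs, abs_of_pos hα]
    have habs : |L (θ + α • v) - L (θ - α • v) - 2 * α * ⟪g, v⟫| ≤ L₀ * α ^ 2 * ‖v‖ ^ 2 := by
      have := abs_sub (L (θ + α • v) - L θ - α * ⟪g, v⟫) (L (θ - α • v) - L θ - -(α * ⟪g, v⟫))
      calc |L (θ + α • v) - L (θ - α • v) - 2 * α * ⟪g, v⟫|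
          = |(L (θ + α • v) - L θ - α * ⟪g, v⟫) - (L (θ - α • v) - L θ - -(α * ⟪g, v⟫))| := by
            congr 1; ring
        _ ≤ |L (θ + α • v) - L θ - α * ⟪g, v⟫| + |L (θ - α • v) - L θ - -(α * ⟪g, v⟫)| :=
            abs_sub _ _
        _ ≤ L₀ / 2 * ‖α • v‖ ^ 2 + L₀ / 2 * ‖α • v‖ ^ 2 := add_le_add t1 t2
        _ = L₀ * α ^ 2 * ‖v‖ ^ 2 := by rw [hns]; ring
    have hdiffsmul : f ω - ⟪g, v⟫ • v
        = ((L (θ + α • v) - L (θ - α • v)) / (2 * α) - ⟪g, v⟫) • v := by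
      rw [sub_smul]
    rw [hdiffsmul, norm_smul, Real.norm_eq_abs]
    have heq : (L (θ + α • v) - L (θ - α • v)) / (2 * α) - ⟪g, v⟫
        = (L (θ + α • v) - L (θ - α • v) - 2 * α * ⟪g, v⟫) / (2 * α) := by
      field_simp
    rw [heq, abs_div, abs_of_pos (by linarith : (0:ℝ) < 2 * α)]
    calc |L (θ + α • v) - L (θ - α • v) - 2 * α * ⟪g, v⟫| / (2 * α) * ‖v‖
        ≤ L₀ * α ^ 2 * ‖v‖ ^ 2 / (2 * α) * ‖v‖ := by
          apply mul_le_mul_of_nonneg_right _ (norm_nonneg _)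
          exact div_le_div_of_nonneg_right habs (by linarith) |>.trans_eq rfl
      _ = L₀ * α / 2 * ‖v‖ ^ 3 := by field_simp
  -- integrability of f
  have hInt1 : Integrable f μ := by
    have hc1 : Continuous fun v : EuclideanSpace ℝ (Fin d) => θ + α • v := by fun_prop
    have hc2 : Continuous fun v : EuclideanSpace ℝ (Fin d) => θ - α • v := by fun_prop
    have hc : Continuous fun v : EuclideanSpace ℝ (Fin d) =>
        ((L (θ + α • v) - L (θ - α • v)) / (2 * α)) • v :=
      (((hdiff.continuous.comp hc1).sub (hdiff.continuous.comp hc2)).div_const _).smul continuous_id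
    apply Integrable.mono' ((hmom3.const_mul (L₀ * α / 2)).add (hbnd.const_mul ‖g‖))
      ((hc.measurable.comp hzm).aestronglyMeasurable)
    filter_upwards with ω
    show ‖f ω‖ ≤ _
    calc ‖f ω‖ ≤ ‖f ω - ⟪g, z ω⟫ • z ω‖ + ‖⟪g, z ω⟫ • z ω‖ := by
          simpa using norm_add_le (f ω - ⟪g, z ω⟫ • z ω) (⟪g, z ω⟫ • z ω)
      _ ≤ L₀ * α / 2 * ‖z ω‖ ^ 3 + ‖g‖ * (1 + ‖z ω‖ ^ 3) := by
          apply add_le_add (hkey ω)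
          rw [norm_smul, Real.norm_eq_abs]
          calc |⟪g, z ω⟫| * ‖z ω‖ ≤ (‖g‖ * ‖z ω‖) * ‖z ω‖ :=
              mul_le_mul_of_nonneg_right (abs_real_inner_le_norm _ _) (norm_nonneg _)
            _ = ‖g‖ * ‖z ω‖ ^ 2 := by ring
            _ ≤ ‖g‖ * (1 + ‖z ω‖ ^ 3) :=
              mul_le_mul_of_nonneg_left (hsq _ (norm_nonneg _)) (norm_nonneg _)
  -- conclude
  calc ‖(∫ ω, f ω ∂μ) - g‖
      = ‖∫ ω, (f ω - ⟪g, z ω⟫ • z ω) ∂μ‖ := by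
        rw [integral_sub hInt1 hInt2, hEg]
    _ ≤ ∫ ω, ‖f ω - ⟪g, z ω⟫ • z ω‖ ∂μ := norm_integral_le_integral_norm _
    _ ≤ ∫ ω, L₀ * α / 2 * ‖z ω‖ ^ 3 ∂μ :=
        integral_mono (hInt1.sub hInt2).norm (hmom3.const_mul _) hkey
    _ = L₀ * α / 2 * ∫ ω, ‖z ω‖ ^ 3 ∂μ := integral_const_mul _ _
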